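/- Let α, β, λ be nonzero complex numbers such that |α| = 1, |β| = 1, and |λ|² = 1/2. Then λX₃ is a unitary matrix: (λX₃)(λX₃)† = I₈. -/

import Mathlib

open Matrix

/-- The X-shaped matrix `X₃` with parameters `α, β`. -/
noncomputable def X3 (α β : ℂ) : Matrix (Fin 8) (Fin 8) ℂ :=
  !![1, 0, 0, 0, 0, 0, 0, α * β ^ 2;
     0, 1, 0, 0, 0, 0, -β, 0;
     0, 0, 1, 0, 0, α, 0, 0;
     0, 0, 0, 1, -(1 / β), 0, 0, 0;
     0, 0, 0, β, 1, 0, 0, 0;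
     0, 0, -(1 / α), 0, 0, 1, 0, 0;
     0, 1 / β, 0, 0, 0, 0, 1, 0;
     -(1 / (α * β ^ 2)), 0, 0, 0, 0, 0, 0, 1]

private lemma cv8_5 {γ : Type*} (x : γ) (u : Fin 7 → γ) : Matrix.vecCons x u (5 : Fin 8) = u 4 := rfl
private lemma cv8_6 {γ : Type*} (x : γ) (u : Fin 7 → γ) : Matrix.vecCons x u (6 : Fin 8) = u 5 := rfl
private lemma cv8_7 {γ : Type*} (x : γ) (u : Fin 7 → γ) : Matrix.vecCons x u (7 : Fin 8) = u 6 := rfl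
private lemma cv7_5 {γ : Type*} (x : γ) (u : Fin 6 → γ) : Matrix.vecCons x u (5 : Fin 7) = u 4 := rfl
private lemma cv7_6 {γ : Type*} (x : γ) (u : Fin 6 → γ) : Matrix.vecCons x u (6 : Fin 7) = u 5 := rfl
private lemma cv6_5 {γ : Type*} (x : γ) (u : Fin 5 → γ) : Matrix.vecCons x u (5 : Fin 6) = u 4 := rfl

set_option maxHeartbeats 4000000 in
/-- If `|α| = 1`, `|β| = 1` and `|λ|² = 1/2`, then `λ X₃` is a unitary matrix. -/
theorem X3_unitary (α β lam : ℂ) (hα : α ≠ 0) (hβ : β ≠ 0) (hlam : lam ≠ 0)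
    (haα : ‖α‖ = 1) (haβ : ‖β‖ = 1)
    (hl : ‖lam‖ ^ 2 = 1 / 2) :
    (lam • X3 α β) * (lam • X3 α β)ᴴ = (1 : Matrix (Fin 8) (Fin 8) ℂ) := by
  have hcα : (starRingEnd ℂ) α = α⁻¹ := (Complex.inv_eq_conj haα).symm
  have hcβ : (starRingEnd ℂ) β = β⁻¹ := (Complex.inv_eq_conj haβ).symm
  have hll : lam * (starRingEnd ℂ) lam = 1 / 2 := by
    rw [Complex.mul_conj]
    rw [← Complex.sq_norm] at *
    push_cast [hl]; norm_num
  have hclam : (starRingEnd ℂ) lam = 1 / (2 * lam) := by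
    field_simp; linear_combination 2 * hll
  ext i j
  fin_cases i <;> fin_cases j <;>
    simp [X3, Matrix.mul_apply, Fin.sum_univ_succ, Matrix.one_apply, map_neg, _root_.map_mul,
      map_inv₀, hcα, hcβ, Matrix.conjTranspose_apply, hclam,
      cv8_5, cv8_6, cv8_7, cv7_5, cv7_6, cv6_5] <;>
    (try field_simp) <;> (try ring)
  all_goals field_simp
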